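/- Let H be a Hopf algebra. For all x ∈ H, the element t⁻¹_{S(x₁)} t⁻¹_{x₂} of S(t_H)_Θ belongs to the generic base algebra B_H; explicitly, t⁻¹_{S(x₁)} t⁻¹_{x₂} = σ⁻¹(S(x₁), x₂) · t⁻¹_1. -/

import Mathlib

open TensorProduct

noncomputable section

variable (k : Type) [Field k]

/-- Convolution product of two linear maps from a coalgebra to an algebra. -/
def conv {C A : Type} [AddCommGroup C] [Module k C] [Coalgebra k C]
    [Ring A] [Algebra k A] (f g : C →ₗ[k] A) : C →ₗ[k] A :=
  LinearMap.mul' k A ∘ₗ TensorProduct.map f g ∘ₗ Coalgebra.comul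

/-- Unit of the convolution algebra: `unit ∘ counit`. -/
def convOne {C A : Type} [AddCommGroup C] [Module k C] [Coalgebra k C]
    [Ring A] [Algebra k A] : C →ₗ[k] A :=
  Algebra.linearMap k A ∘ₗ Coalgebra.counit

section CocycleDefs

variable {H : Type} [Ring H] [HopfAlgebra k H]

/-- The two-cocycle condition `β(x₁,y₁) β(x₂y₂,z) = β(y₁,z₁) β(x,y₂z₂)` for an `A`-valued
bilinear form `β` on `H`, as an equality of linear maps on `(H ⊗ H) ⊗ H`. -/
def IsCocycle {A : Type} [CommRing A] [Algebra k A] (β : H ⊗[k] H →ₗ[k] A) : Prop :=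
  conv k (LinearMap.mul' k A ∘ₗ TensorProduct.map β (convOne k))
      (β ∘ₗ TensorProduct.map (LinearMap.mul' k H) LinearMap.id)
  = conv k
      (LinearMap.mul' k A ∘ₗ TensorProduct.map (convOne k) β
        ∘ₗ (TensorProduct.assoc k H H H).toLinearMap)
      (β ∘ₗ TensorProduct.map LinearMap.id (LinearMap.mul' k H)
        ∘ₗ (TensorProduct.assoc k H H H).toLinearMap)

/-- `β` and `βinv` are mutually inverse for the convolution product. -/
def IsConvInverse {A : Type} [CommRing A] [Algebra k A]
    (β βinv : H ⊗[k] H →ₗ[k] A) : Prop :=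
  conv k β βinv = convOne k ∧ conv k βinv β = convOne k

end CocycleDefs

variable (C : Type) [AddCommGroup C] [Module k C] [Coalgebra k C]

/-- A model of Takeuchi's free commutative Hopf algebra `S(t_C)_Θ` generated by the
coalgebra `C`, together with its generators `t_x` and `t⁻¹_x`. -/
structure TakData (T : Type) [CommRing T] [HopfAlgebra k T] where
  t : C →ₗ[k] T
  tinv : C →ₗ[k] T
  comul_t : Coalgebra.comul ∘ₗ t = TensorProduct.map t t ∘ₗ Coalgebra.comul
  counit_t : Coalgebra.counit ∘ₗ t = Coalgebra.counit
  comul_tinv : Coalgebra.comul ∘ₗ tinv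
    = TensorProduct.map tinv tinv ∘ₗ (TensorProduct.comm k C C).toLinearMap ∘ₗ Coalgebra.comul
  counit_tinv : Coalgebra.counit ∘ₗ tinv = Coalgebra.counit
  conv_t_tinv : conv k t tinv = convOne k
  conv_tinv_t : conv k tinv t = convOne k
  antipode_t : HopfAlgebra.antipode (R := k) ∘ₗ t = tinv
  antipode_tinv : HopfAlgebra.antipode (R := k) ∘ₗ tinv = t
  adjoin_eq_top : Algebra.adjoin k (Set.range ⇑t ∪ Set.range ⇑tinv) = ⊤

namespace TakData

variable {k C} {H : Type} [Ring H] [HopfAlgebra k H]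
variable {T : Type} [CommRing T] [HopfAlgebra k T] (D : TakData k H T)

/-- `x ⊗ y ↦ t_x t_y`. -/
def tt : H ⊗[k] H →ₗ[k] T := LinearMap.mul' k T ∘ₗ TensorProduct.map D.t D.t

/-- `x ⊗ y ↦ t⁻¹_{xy}`. -/
def tinvMul : H ⊗[k] H →ₗ[k] T := D.tinv ∘ₗ LinearMap.mul' k H

/-- `x ⊗ y ↦ t_{xy}`. -/
def tMul : H ⊗[k] H →ₗ[k] T := D.t ∘ₗ LinearMap.mul' k H

/-- `x ⊗ y ↦ t⁻¹_x t⁻¹_y`. -/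
def tinvtinv : H ⊗[k] H →ₗ[k] T := LinearMap.mul' k T ∘ₗ TensorProduct.map D.tinv D.tinv

/-- The generic cocycle for the trivial cocycle: `σ(x,y) = t_{x₁} t_{y₁} t⁻¹_{x₂y₂}`. -/
def sigmaEps : H ⊗[k] H →ₗ[k] T := conv k D.tt D.tinvMul

/-- Its convolution inverse: `σ⁻¹(x,y) = t_{x₁y₁} t⁻¹_{x₂} t⁻¹_{y₂}`. -/
def sigmaEpsInv : H ⊗[k] H →ₗ[k] T := conv k D.tMul D.tinvtinv

/-- The generic cocycle attached to `α`: `σ_α(x,y) = t_{x₁} t_{y₁} α(x₂,y₂) t⁻¹_{x₃y₃}`. -/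
def sigma (α : H ⊗[k] H →ₗ[k] k) : H ⊗[k] H →ₗ[k] T :=
  conv k (conv k D.tt (Algebra.linearMap k T ∘ₗ α)) D.tinvMul

/-- The inverse generic cocycle: `σ_α⁻¹(x,y) = t_{x₁y₁} α⁻¹(x₂,y₂) t⁻¹_{x₃} t⁻¹_{y₃}`. -/
def sigmaInv (αinv : H ⊗[k] H →ₗ[k] k) : H ⊗[k] H →ₗ[k] T :=
  conv k (conv k D.tMul (Algebra.linearMap k T ∘ₗ αinv)) D.tinvtinv

/-- The generic base algebra `B_H^α`: the subalgebra of `S(t_H)_Θ` generated by the values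
of the generic cocycle `σ_α` and of its inverse. -/
def genBase (α αinv : H ⊗[k] H →ₗ[k] k) : Subalgebra k T :=
  Algebra.adjoin k
    (Set.range (fun p : H × H => D.sigma α (p.1 ⊗ₜ[k] p.2)) ∪
      Set.range (fun p : H × H => D.sigmaInv αinv (p.1 ⊗ₜ[k] p.2)))

/-- The generic base algebra `B_H` for the trivial cocycle. -/
def B : Subalgebra k T :=
  Algebra.adjoin k
    (Set.range (fun p : H × H => D.sigmaEps (p.1 ⊗ₜ[k] p.2)) ∪
      Set.range (fun p : H × H => D.sigmaEpsInv (p.1 ⊗ₜ[k] p.2)))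

end TakData

section AuxConv

open Coalgebra HopfAlgebra

variable {k}

section General

variable {C A : Type} [AddCommGroup C] [Module k C] [Coalgebra k C]
  [Ring A] [Algebra k A]

lemma conv_repr (f g : C →ₗ[k] A) {x : C} {ι : Type*} (r : Coalgebra.Repr k x ι) :
    conv k f g x = ∑ i ∈ r.index, f (r.left i) * g (r.right i) := by
  simp only [conv, LinearMap.comp_apply, ← r.eq, map_sum, TensorProduct.map_tmul,
    LinearMap.mul'_apply]

lemma convOne_apply' (x : C) : convOne k x = algebraMap k A (Coalgebra.counit x) := rfl

lemma repr_sum_counit_smul {x : C} {ι : Type*} (r : Coalgebra.Repr k x ι) :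
    ∑ i ∈ r.index, Coalgebra.counit (R := k) (r.left i) • r.right i = x := by
  have h := congrArg (TensorProduct.lid k C) (Coalgebra.sum_counit_tmul_eq r)
  simp only [map_sum, TensorProduct.lid_tmul, one_smul] at h
  exact h

lemma repr_sum_smul_counit {x : C} {ι : Type*} (r : Coalgebra.Repr k x ι) :
    ∑ i ∈ r.index, Coalgebra.counit (R := k) (r.right i) • r.left i = x := by
  have h := congrArg (TensorProduct.rid k C) (Coalgebra.sum_tmul_counit_eq r)
  simp only [map_sum, TensorProduct.rid_tmul, one_smul] at h
  exact h

lemma conv_convOne_left (f : C →ₗ[k] A) : conv k (convOne k) f = f := by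
  ext x
  set r := Coalgebra.Repr.arbitrary k x with hr
  rw [conv_repr _ _ r]
  calc ∑ i ∈ r.index, convOne k (r.left i) * f (r.right i)
      = ∑ i ∈ r.index, Coalgebra.counit (R := k) (r.left i) • f (r.right i) := by
        refine Finset.sum_congr rfl fun i _ => ?_
        rw [convOne_apply', ← Algebra.smul_def]
    _ = f x := by
        simp_rw [← map_smul]
        rw [← map_sum, repr_sum_counit_smul r]

lemma conv_convOne_right (f : C →ₗ[k] A) : conv k f (convOne k) = f := by
  ext x
  set r := Coalgebra.Repr.arbitrary k x with hr
  rw [conv_repr _ _ r]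
  calc ∑ i ∈ r.index, f (r.left i) * convOne k (r.right i)
      = ∑ i ∈ r.index, Coalgebra.counit (R := k) (r.right i) • f (r.left i) := by
        refine Finset.sum_congr rfl fun i _ => ?_
        rw [convOne_apply', ← Algebra.commutes, ← Algebra.smul_def]
    _ = f x := by
        simp_rw [← map_smul]
        rw [← map_sum, repr_sum_smul_counit r]

lemma conv_assoc (f g h : C →ₗ[k] A) :
    conv k (conv k f g) h = conv k f (conv k g h) := by
  ext x
  set r := Coalgebra.Repr.arbitrary k x with hr
  set a₁ : (i : C × C) → Coalgebra.Repr k (r.left i) (C × C) :=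
    fun i => Coalgebra.Repr.arbitrary k (r.left i) with ha₁
  set a₂ : (i : C × C) → Coalgebra.Repr k (r.right i) (C × C) :=
    fun i => Coalgebra.Repr.arbitrary k (r.right i) with ha₂
  have key := congrArg
    (LinearMap.mul' k A ∘ₗ TensorProduct.map f (LinearMap.mul' k A ∘ₗ TensorProduct.map g h))
    (Coalgebra.sum_tmul_tmul_eq r a₁ a₂)
  simp only [map_sum, LinearMap.comp_apply, TensorProduct.map_tmul,
    LinearMap.mul'_apply] at key
  calc conv k (conv k f g) h x
      = ∑ i ∈ r.index, ∑ j ∈ (a₁ i).index,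
          f ((a₁ i).left j) * (g ((a₁ i).right j) * h (r.right i)) := by
        rw [conv_repr _ _ r]
        refine Finset.sum_congr rfl fun i _ => ?_
        rw [conv_repr f g (a₁ i), Finset.sum_mul]
        exact Finset.sum_congr rfl fun j _ => mul_assoc _ _ _
    _ = ∑ i ∈ r.index, ∑ j ∈ (a₂ i).index,
          f (r.left i) * (g ((a₂ i).left j) * h ((a₂ i).right j)) := key
    _ = conv k f (conv k g h) x := by
        rw [conv_repr _ _ r]
        refine (Finset.sum_congr rfl fun i _ => ?_).symm
        rw [conv_repr g h (a₂ i), Finset.mul_sum]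

lemma algHom_comp_conv {B : Type} [Ring B] [Algebra k B] (φ : A →ₐ[k] B)
    (f g : C →ₗ[k] A) :
    φ.toLinearMap ∘ₗ conv k f g = conv k (φ.toLinearMap ∘ₗ f) (φ.toLinearMap ∘ₗ g) := by
  ext x
  set r := Coalgebra.Repr.arbitrary k x with hr
  simp only [LinearMap.comp_apply, conv_repr f g r,
    conv_repr (φ.toLinearMap ∘ₗ f) (φ.toLinearMap ∘ₗ g) r, map_sum, map_mul,
    AlgHom.toLinearMap_apply]

lemma algHom_comp_convOne {B : Type} [Ring B] [Algebra k B] (φ : A →ₐ[k] B) :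
    φ.toLinearMap ∘ₗ (convOne k : C →ₗ[k] A) = convOne k := by
  ext x
  simp [convOne, AlgHom.commutes]

end General

end AuxConv

section Hopf

open Coalgebra HopfAlgebra

variable {k : Type} [Field k] {H : Type} [Ring H] [HopfAlgebra k H]

lemma conv_antipode_id :
    conv k (antipode (R := k) (A := H)) LinearMap.id = convOne k := by
  have h : TensorProduct.map (antipode (R := k) (A := H)) LinearMap.id
      = (antipode (R := k) (A := H)).rTensor H := rfl
  unfold conv convOne
  rw [h]
  exact mul_antipode_rTensor_comul

lemma conv_id_antipode :
    conv k LinearMap.id (antipode (R := k) (A := H)) = convOne k := by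
  have h : TensorProduct.map LinearMap.id (antipode (R := k) (A := H))
      = (antipode (R := k) (A := H)).lTensor H := rfl
  unfold conv convOne
  rw [h]
  exact mul_antipode_lTensor_comul

/-- `x ↦ x ⊗ 1` -/
noncomputable def incl1 : H →ₗ[k] H ⊗[k] H :=
  (Algebra.TensorProduct.includeLeft : H →ₐ[k] H ⊗[k] H).toLinearMap

/-- `x ↦ 1 ⊗ x` -/
noncomputable def incl2 : H →ₗ[k] H ⊗[k] H :=
  (Algebra.TensorProduct.includeRight : H →ₐ[k] H ⊗[k] H).toLinearMap

lemma comul_eq_conv :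
    (Coalgebra.comul : H →ₗ[k] H ⊗[k] H) = conv k incl1 incl2 := by
  ext x
  set r := Coalgebra.Repr.arbitrary k x with hr
  rw [conv_repr _ _ r, ← r.eq]
  refine Finset.sum_congr rfl fun i _ => ?_
  simp [incl1, incl2, Algebra.TensorProduct.tmul_mul_tmul]

lemma commSS_comul_eq_conv :
    (TensorProduct.comm k H H).toLinearMap ∘ₗ
        TensorProduct.map (antipode (R := k)) (antipode (R := k)) ∘ₗ Coalgebra.comul
      = conv k (incl2 ∘ₗ antipode (R := k)) (incl1 ∘ₗ antipode (R := k)) := by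
  ext x
  set r := Coalgebra.Repr.arbitrary k x with hr
  rw [LinearMap.comp_apply, LinearMap.comp_apply, conv_repr _ _ r, ← r.eq]
  simp only [map_sum, TensorProduct.map_tmul, TensorProduct.comm_tmul, LinearEquiv.coe_coe]
  refine Finset.sum_congr rfl fun i _ => ?_
  simp [incl1, incl2, Algebra.TensorProduct.tmul_mul_tmul]

lemma comul_comp_antipode :
    Coalgebra.comul ∘ₗ antipode (R := k) (A := H)
      = (TensorProduct.comm k H H).toLinearMap ∘ₗ
          TensorProduct.map (antipode (R := k)) (antipode (R := k)) ∘ₗ Coalgebra.comul := by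
  have hcomul : (Coalgebra.comul : H →ₗ[k] H ⊗[k] H)
      = (Bialgebra.comulAlgHom k H).toLinearMap := rfl
  have hF : conv k (Coalgebra.comul : H →ₗ[k] H ⊗[k] H)
      (Coalgebra.comul ∘ₗ antipode (R := k) (A := H)) = convOne k := by
    calc _ = conv k ((Bialgebra.comulAlgHom k H).toLinearMap ∘ₗ LinearMap.id)
            ((Bialgebra.comulAlgHom k H).toLinearMap ∘ₗ antipode (R := k)) := by
          rw [LinearMap.comp_id, ← hcomul]
      _ = (Bialgebra.comulAlgHom k H).toLinearMap ∘ₗ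
            conv k LinearMap.id (antipode (R := k)) := (algHom_comp_conv _ _ _).symm
      _ = convOne k := by rw [conv_id_antipode]; exact algHom_comp_convOne _
  have h11 : conv k (incl1 ∘ₗ antipode (R := k)) (incl1 : H →ₗ[k] H ⊗[k] H)
      = convOne k := by
    have h := algHom_comp_conv (k := k)
      (Algebra.TensorProduct.includeLeft : H →ₐ[k] H ⊗[k] H)
      (antipode (R := k)) LinearMap.id
    rw [conv_antipode_id, algHom_comp_convOne, LinearMap.comp_id] at h
    exact h.symm
  have h22 : conv k (incl2 ∘ₗ antipode (R := k)) (incl2 : H →ₗ[k] H ⊗[k] H)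
      = convOne k := by
    have h := algHom_comp_conv (k := k)
      (Algebra.TensorProduct.includeRight : H →ₐ[k] H ⊗[k] H)
      (antipode (R := k)) LinearMap.id
    rw [conv_antipode_id, algHom_comp_convOne, LinearMap.comp_id] at h
    exact h.symm
  have hG : conv k ((TensorProduct.comm k H H).toLinearMap ∘ₗ
      TensorProduct.map (antipode (R := k)) (antipode (R := k)) ∘ₗ Coalgebra.comul)
      (Coalgebra.comul : H →ₗ[k] H ⊗[k] H) = convOne k := by
    rw [commSS_comul_eq_conv, comul_eq_conv]
    calc _ = conv k (incl2 ∘ₗ antipode (R := k))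
            (conv k (conv k (incl1 ∘ₗ antipode (R := k)) incl1) incl2) := by
          rw [conv_assoc, conv_assoc]
      _ = conv k (incl2 ∘ₗ antipode (R := k)) incl2 := by
          rw [h11, conv_convOne_left]
      _ = convOne k := by rw [h22]
  rw [← conv_convOne_left (Coalgebra.comul ∘ₗ antipode (R := k) (A := H)), ← hG,
    conv_assoc, hF, conv_convOne_right]

end Hopf

section MainAux

open Coalgebra HopfAlgebra

variable {k : Type} [Field k] {H : Type} [Ring H] [HopfAlgebra k H]

/-- A representation of `comul (S u)` obtained from one of `comul u`. -/
noncomputable def antipodeRepr {u : H} {ι : Type*} (r : Coalgebra.Repr k u ι) :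
    Coalgebra.Repr k (antipode (R := k) u) ι where
  index := r.index
  left := fun i => antipode (R := k) (r.right i)
  right := fun i => antipode (R := k) (r.left i)
  eq := by
    have h := LinearMap.congr_fun (comul_comp_antipode (k := k) (H := H)) u
    simp only [LinearMap.comp_apply] at h
    rw [h, ← r.eq]
    simp [map_sum]

@[simp] lemma antipodeRepr_index {u : H} {ι : Type*} (r : Coalgebra.Repr k u ι) :
    (antipodeRepr r).index = r.index := rfl

@[simp] lemma antipodeRepr_left {u : H} {ι : Type*} (r : Coalgebra.Repr k u ι) (i : ι) :
    (antipodeRepr r).left i = antipode (R := k) (r.right i) := rfl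

@[simp] lemma antipodeRepr_right {u : H} {ι : Type*} (r : Coalgebra.Repr k u ι) (i : ι) :
    (antipodeRepr r).right i = antipode (R := k) (r.left i) := rfl

/-- A representation of `comul 1`. -/
noncomputable def oneRepr : Coalgebra.Repr k (1 : H) Unit where
  index := Finset.univ
  left := fun _ => 1
  right := fun _ => 1
  eq := by simp [Bialgebra.comul_one, Algebra.TensorProduct.one_def]

variable {T : Type} [CommRing T] [HopfAlgebra k T] (D : TakData k H T)

lemma t_tinv_one : D.t 1 * D.tinv 1 = 1 := by
  have h := LinearMap.congr_fun D.conv_t_tinv (1 : H)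
  simp only [conv, convOne, LinearMap.comp_apply, Bialgebra.comul_one,
    Algebra.TensorProduct.one_def, TensorProduct.map_tmul, LinearMap.mul'_apply,
    Bialgebra.counit_one, map_one, Algebra.linearMap_apply] at h
  exact h

lemma sigmaEpsInv_repr (u v : H) {ι κ : Type*} (ru : Coalgebra.Repr k u ι) (rv : Coalgebra.Repr k v κ) :
    D.sigmaEpsInv (u ⊗ₜ[k] v) = ∑ i ∈ ru.index, ∑ j ∈ rv.index,
      D.t (ru.left i * rv.left j) * (D.tinv (ru.right i) * D.tinv (rv.right j)) := by
  have hcom : (Coalgebra.comul (R := k) (u ⊗ₜ[k] v))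
      = TensorProduct.tensorTensorTensorComm k H H H H
          (Coalgebra.comul u ⊗ₜ[k] Coalgebra.comul v) := rfl
  rw [TakData.sigmaEpsInv, conv]
  simp only [LinearMap.comp_apply, hcom]
  rw [← ru.eq, ← rv.eq]
  simp only [TensorProduct.sum_tmul, TensorProduct.tmul_sum, map_sum,
    TensorProduct.tensorTensorTensorComm_tmul, TensorProduct.map_tmul, LinearMap.mul'_apply,
    TakData.tMul, TakData.tinvtinv, LinearMap.comp_apply]
  rw [Finset.sum_comm]

/-- The auxiliary map `q ⊗ y ↦ ∑ t(S(q) y₁) t⁻¹(y₂)`. -/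
noncomputable def Wmap : H ⊗[k] H →ₗ[k] T :=
  LinearMap.mul' k T ∘ₗ
    TensorProduct.map (D.t ∘ₗ LinearMap.mul' k H ∘ₗ (antipode (R := k)).rTensor H) D.tinv ∘ₗ
    (TensorProduct.assoc k H H H).symm.toLinearMap ∘ₗ
    (Coalgebra.comul : H →ₗ[k] H ⊗[k] H).lTensor H

lemma Wmap_tmul (q y : H) {ι : Type*} (ry : Coalgebra.Repr k y ι) :
    Wmap D (q ⊗ₜ[k] y) = ∑ m ∈ ry.index,
      D.t (antipode (R := k) q * ry.left m) * D.tinv (ry.right m) := by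
  rw [Wmap]
  simp only [LinearMap.comp_apply, LinearMap.lTensor_tmul]
  rw [← ry.eq]
  simp only [TensorProduct.tmul_sum, map_sum, LinearEquiv.coe_coe,
    TensorProduct.assoc_symm_tmul, TensorProduct.map_tmul, LinearMap.mul'_apply,
    LinearMap.rTensor_tmul, LinearMap.comp_apply]

lemma Wmap_comul (y : H) : Wmap D (Coalgebra.comul y) = D.t 1 * D.tinv y := by
  set ry := Coalgebra.Repr.arbitrary k y with hry
  set rl : (i : H × H) → Coalgebra.Repr k (ry.left i) (H × H) :=
    fun i => Coalgebra.Repr.arbitrary k (ry.left i) with hrl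
  have hexp : (Coalgebra.comul : H →ₗ[k] H ⊗[k] H).rTensor H (Coalgebra.comul y)
      = ∑ i ∈ ry.index, ∑ j ∈ (rl i).index,
          ((rl i).left j ⊗ₜ[k] (rl i).right j) ⊗ₜ[k] ry.right i := by
    rw [← ry.eq, map_sum]
    refine Finset.sum_congr rfl fun i _ => ?_
    rw [LinearMap.rTensor_tmul, ← (rl i).eq, TensorProduct.sum_tmul]
  rw [Wmap]
  simp only [LinearMap.comp_apply]
  rw [← Coalgebra.coassoc_apply y, hexp]
  simp only [map_sum, LinearEquiv.coe_coe, LinearEquiv.symm_apply_apply,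
    TensorProduct.map_tmul, LinearMap.mul'_apply, LinearMap.comp_apply,
    LinearMap.rTensor_tmul]
  calc ∑ i ∈ ry.index, ∑ j ∈ (rl i).index,
        D.t (antipode (R := k) ((rl i).left j) * (rl i).right j) * D.tinv (ry.right i)
      = ∑ i ∈ ry.index,
          Coalgebra.counit (R := k) (ry.left i) • (D.t 1 * D.tinv (ry.right i)) := by
        refine Finset.sum_congr rfl fun i _ => ?_
        rw [← Finset.sum_mul, ← map_sum, HopfAlgebra.sum_antipode_mul_eq_algebraMap_counit (rl i),
          Algebra.algebraMap_eq_smul_one, map_smul, smul_mul_assoc]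
    _ = D.t 1 * D.tinv y := by
        simp_rw [← mul_smul_comm]
        rw [← Finset.mul_sum]
        congr 1
        simp_rw [← map_smul]
        rw [← map_sum, repr_sum_counit_smul ry]

lemma sigmaEpsInv_one_one : D.sigmaEpsInv ((1 : H) ⊗ₜ[k] (1 : H)) = D.tinv 1 := by
  rw [sigmaEpsInv_repr D 1 1 oneRepr oneRepr]
  simp only [oneRepr, Finset.univ_unique, Finset.sum_singleton, mul_one]
  rw [← mul_assoc, t_tinv_one, one_mul]

lemma sigmaEpsInv_mem (z : H ⊗[k] H) : D.sigmaEpsInv z ∈ D.B := by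
  induction z using TensorProduct.induction_on with
  | zero => rw [map_zero]; exact zero_mem _
  | tmul u v => exact Algebra.subset_adjoin (Set.mem_union_right _ ⟨(u, v), rfl⟩)
  | add a b ha hb => rw [map_add]; exact add_mem ha hb

end MainAux

/-- For all `x ∈ H`, the element `t⁻¹_{S(x₁)} t⁻¹_{x₂}` of `S(t_H)_Θ`
equals `σ⁻¹(S(x₁), x₂) · t⁻¹_1` and in particular belongs to the generic base algebra
`B_H`. -/
theorem tinv_antipode_tinv_mem_B
    {H : Type} [Ring H] [HopfAlgebra k H]
    {T : Type} [CommRing T] [HopfAlgebra k T] (D : TakData k H T) :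
    ∀ x : H,
      conv k (D.tinv ∘ₗ HopfAlgebra.antipode (R := k)) D.tinv x
        = D.sigmaEpsInv
            (TensorProduct.map (HopfAlgebra.antipode (R := k)) LinearMap.id
              (Coalgebra.comul x)) * D.tinv 1 ∧
      conv k (D.tinv ∘ₗ HopfAlgebra.antipode (R := k)) D.tinv x ∈ D.B := by
  classical
  intro x
  set r := Coalgebra.Repr.arbitrary k x with hr
  set ra : (i : H × H) → Coalgebra.Repr k (r.left i) (H × H) :=
    fun i => Coalgebra.Repr.arbitrary k (r.left i) with hra
  set rb : (i : H × H) → Coalgebra.Repr k (r.right i) (H × H) :=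
    fun i => Coalgebra.Repr.arbitrary k (r.right i) with hrb
  have hsig : D.sigmaEpsInv
      (TensorProduct.map (HopfAlgebra.antipode (R := k)) LinearMap.id (Coalgebra.comul x))
      = ∑ i ∈ r.index, D.tinv (HopfAlgebra.antipode (R := k) (r.left i)) *
          (D.t 1 * D.tinv (r.right i)) := by
    have hz : TensorProduct.map (HopfAlgebra.antipode (R := k)) LinearMap.id
        (Coalgebra.comul x)
        = ∑ i ∈ r.index, HopfAlgebra.antipode (R := k) (r.left i) ⊗ₜ[k] r.right i := by
      rw [← r.eq, map_sum]
      simp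
    rw [hz, map_sum]
    have key := congrArg (LinearMap.mul' k T ∘ₗ
        TensorProduct.map (D.tinv ∘ₗ HopfAlgebra.antipode (R := k)) (Wmap D))
      (Coalgebra.sum_tmul_tmul_eq r ra rb)
    simp only [map_sum, LinearMap.comp_apply, TensorProduct.map_tmul,
      LinearMap.mul'_apply] at key
    calc ∑ i ∈ r.index,
          D.sigmaEpsInv (HopfAlgebra.antipode (R := k) (r.left i) ⊗ₜ[k] r.right i)
        = ∑ i ∈ r.index, ∑ j ∈ (ra i).index,
            D.tinv (HopfAlgebra.antipode (R := k) ((ra i).left j)) *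
              Wmap D ((ra i).right j ⊗ₜ[k] r.right i) := by
          refine Finset.sum_congr rfl fun i _ => ?_
          rw [sigmaEpsInv_repr D _ _ (antipodeRepr (ra i)) (rb i)]
          simp only [antipodeRepr_index, antipodeRepr_left, antipodeRepr_right]
          refine Finset.sum_congr rfl fun j _ => ?_
          rw [Wmap_tmul D _ _ (rb i), Finset.mul_sum]
          refine Finset.sum_congr rfl fun m _ => ?_
          ring
      _ = ∑ i ∈ r.index, D.tinv (HopfAlgebra.antipode (R := k) (r.left i)) *
            (D.t 1 * D.tinv (r.right i)) := by
          rw [key]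
          refine Finset.sum_congr rfl fun i _ => ?_
          rw [← Finset.mul_sum, ← map_sum, (rb i).eq, Wmap_comul]
  have hLHS : conv k (D.tinv ∘ₗ HopfAlgebra.antipode (R := k)) D.tinv x
      = ∑ i ∈ r.index, D.tinv (HopfAlgebra.antipode (R := k) (r.left i)) *
          D.tinv (r.right i) := by
    rw [conv_repr _ _ r]
    simp only [LinearMap.comp_apply]
  have heq : conv k (D.tinv ∘ₗ HopfAlgebra.antipode (R := k)) D.tinv x
      = D.sigmaEpsInv
          (TensorProduct.map (HopfAlgebra.antipode (R := k)) LinearMap.id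
            (Coalgebra.comul x)) * D.tinv 1 := by
    rw [hLHS, hsig, Finset.sum_mul]
    refine Finset.sum_congr rfl fun i _ => ?_
    have hcomm : D.tinv (HopfAlgebra.antipode (R := k) (r.left i)) *
        (D.t 1 * D.tinv (r.right i)) * D.tinv 1
        = (D.t 1 * D.tinv 1) *
            (D.tinv (HopfAlgebra.antipode (R := k) (r.left i)) * D.tinv (r.right i)) := by
      ring
    rw [hcomm, t_tinv_one, one_mul]
  refine ⟨heq, ?_⟩
  rw [heq]
  refine mul_mem (sigmaEpsInv_mem D _) ?_
  rw [← sigmaEpsInv_one_one D]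
  exact sigmaEpsInv_mem D _
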